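/- Let k ≥ 2, let m : {1,…,k} → ℕ with each m(l) ≥ 1, and let B_l ∈ ℂ^{m(l)×m(l)} for l = 1,…,k. For λ ∈ ℂ and each l write ρ_l(λ) for the smallest singular value of λI − B_l. Suppose φ : [0,1] → ℂ is continuous with φ(0) an eigenvalue of B_{l₀} and φ(1) an eigenvalue of B_{l₁}, where l₀ ≠ l₁. Then there exist t ∈ [0,1] and indices p ≠ q such that ρ_p(φ(t)) = ρ_q(φ(t)) and ρ_p(φ(t)) ≤ ρ_r(φ(t)) for every r ∈ {1,…,k}; that is, along any continuous path joining eigenvalues belonging to different diagonal blocks, the minimum over the blocks of the smallest singular value is attained simultaneously by two different blocks at some point of the path. -/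

import Mathlib

open Matrix

section aux

variable {n : ℕ}

lemma repr_toEuclideanLin_conjTranspose_mul_self (M : Matrix (Fin n) (Fin n) ℂ)
    (x : EuclideanSpace ℂ (Fin n)) (i : Fin n) :
    (isHermitian_conjTranspose_mul_self M).eigenvectorBasis.repr
        (toEuclideanLin (Mᴴ * M) x) i =
      ((isHermitian_conjTranspose_mul_self M).eigenvalues i : ℂ) *
        (isHermitian_conjTranspose_mul_self M).eigenvectorBasis.repr x i := by
  set hA := isHermitian_conjTranspose_mul_self M
  have hsymm : (toEuclideanLin (Mᴴ * M)).IsSymmetric :=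
    (Matrix.isHermitian_iff_isSymmetric).mp hA
  have hB : toEuclideanLin (Mᴴ * M) (hA.eigenvectorBasis i)
      = (hA.eigenvalues i : ℂ) • hA.eigenvectorBasis i := by
    have := hA.mulVec_eigenvectorBasis i
    apply PiLp.ext
    intro j
    have := congrFun this j
    simpa [toEuclideanLin_apply, Complex.real_smul] using this
  rw [OrthonormalBasis.repr_apply_apply, ← hsymm, hB, inner_smul_left,
    OrthonormalBasis.repr_apply_apply]
  simp

lemma norm_sq_toEuclideanLin (M : Matrix (Fin n) (Fin n) ℂ) (x : EuclideanSpace ℂ (Fin n)) :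
    ‖toEuclideanLin M x‖ ^ 2 =
      ∑ i, (isHermitian_conjTranspose_mul_self M).eigenvalues i *
        ‖(isHermitian_conjTranspose_mul_self M).eigenvectorBasis.repr x i‖ ^ 2 := by
  set hA := isHermitian_conjTranspose_mul_self M
  have key : ∀ v : Fin n → ℂ, star (M *ᵥ v) ⬝ᵥ (M *ᵥ v) = star v ⬝ᵥ ((Mᴴ * M) *ᵥ v) := by
    intro v
    rw [star_mulVec, ← dotProduct_mulVec, mulVec_mulVec]
  have h1 : (inner ℂ (toEuclideanLin M x) (toEuclideanLin M x) : ℂ)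
      = inner ℂ x (toEuclideanLin (Mᴴ * M) x) := by
    simp only [PiLp.inner_apply, RCLike.inner_apply, toEuclideanLin_apply]
    simpa only [dotProduct, Pi.star_apply, RCLike.star_def, mul_comm] using key x.ofLp
  have h2 : (inner ℂ x (toEuclideanLin (Mᴴ * M) x) : ℂ)
      = inner ℂ (hA.eigenvectorBasis.repr x)
          (hA.eigenvectorBasis.repr (toEuclideanLin (Mᴴ * M) x)) := by
    rw [LinearIsometryEquiv.inner_map_map]
  have h3 : ‖toEuclideanLin M x‖ ^ 2
      = Complex.re (inner ℂ x (toEuclideanLin (Mᴴ * M) x) : ℂ) := by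
    rw [← h1]
    exact (inner_self_eq_norm_sq (𝕜 := ℂ) _).symm
  rw [h3, h2]
  simp only [PiLp.inner_apply, RCLike.inner_apply,
    repr_toEuclideanLin_conjTranspose_mul_self M x]
  rw [Complex.re_sum]
  refine Finset.sum_congr rfl fun i _ => ?_
  have hcc : (starRingEnd ℂ) (hA.eigenvectorBasis.repr x i) * (hA.eigenvectorBasis.repr x i)
      = ((‖hA.eigenvectorBasis.repr x i‖ ^ 2 : ℝ) : ℂ) := by
    rw [mul_comm, Complex.mul_conj, Complex.normSq_eq_norm_sq]
  rw [mul_assoc, mul_comm _ ((starRingEnd ℂ) _), hcc, ← Complex.ofReal_mul, Complex.ofReal_re]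

end aux


/-- The smallest singular value of `λI - B`: the square root of the smallest
eigenvalue of the Hermitian matrix `(λI - B)ᴴ (λI - B)`. -/
noncomputable def sMin {m : ℕ} (B : Matrix (Fin m) (Fin m) ℂ) (lam : ℂ) : ℝ :=
  Real.sqrt (⨅ i, (Matrix.isHermitian_conjTranspose_mul_self
    (lam • (1 : Matrix (Fin m) (Fin m) ℂ) - B)).eigenvalues i)

section aux2

variable {n : ℕ} [NeZero n]

lemma sMin_le_norm (B : Matrix (Fin n) (Fin n) ℂ) (lam : ℂ)
    (x : EuclideanSpace ℂ (Fin n)) (hx : ‖x‖ = 1) :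
    sMin B lam ≤ ‖toEuclideanLin (lam • (1 : Matrix (Fin n) (Fin n) ℂ) - B) x‖ := by
  set M := lam • (1 : Matrix (Fin n) (Fin n) ℂ) - B with hM
  set hA := isHermitian_conjTranspose_mul_self M
  have hbdd : BddBelow (Set.range hA.eigenvalues) := (Set.finite_range _).bddBelow
  have hsum1 : ∑ i, ‖hA.eigenvectorBasis.repr x i‖ ^ 2 = 1 := by
    have hn : ‖hA.eigenvectorBasis.repr x‖ = 1 := by
      rw [LinearIsometryEquiv.norm_map, hx]
    rw [EuclideanSpace.norm_eq] at hn
    have h0 : (0:ℝ) ≤ ∑ i, ‖hA.eigenvectorBasis.repr x i‖ ^ 2 :=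
      Finset.sum_nonneg fun i _ => sq_nonneg _
    nlinarith [Real.sq_sqrt h0]
  have hsum : (⨅ i, hA.eigenvalues i) ≤ ‖toEuclideanLin M x‖ ^ 2 := by
    rw [norm_sq_toEuclideanLin]
    calc (⨅ i, hA.eigenvalues i)
        = ∑ i, (⨅ j, hA.eigenvalues j) * ‖hA.eigenvectorBasis.repr x i‖ ^ 2 := by
          rw [← Finset.mul_sum, hsum1, mul_one]
      _ ≤ ∑ i, hA.eigenvalues i * ‖hA.eigenvectorBasis.repr x i‖ ^ 2 :=
          Finset.sum_le_sum fun i _ =>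
            mul_le_mul_of_nonneg_right (ciInf_le hbdd i) (sq_nonneg _)
  calc sMin B lam = Real.sqrt (⨅ i, hA.eigenvalues i) := rfl
    _ ≤ Real.sqrt (‖toEuclideanLin M x‖ ^ 2) := Real.sqrt_le_sqrt hsum
    _ = ‖toEuclideanLin M x‖ := Real.sqrt_sq (norm_nonneg _)

lemma exists_unit_sMin (B : Matrix (Fin n) (Fin n) ℂ) (lam : ℂ) :
    ∃ x : EuclideanSpace ℂ (Fin n), ‖x‖ = 1 ∧
      ‖toEuclideanLin (lam • (1 : Matrix (Fin n) (Fin n) ℂ) - B) x‖ = sMin B lam := by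
  set M := lam • (1 : Matrix (Fin n) (Fin n) ℂ) - B with hM
  set hA := isHermitian_conjTranspose_mul_self M
  obtain ⟨i₀, hi₀⟩ := Finite.exists_min hA.eigenvalues
  have hμ : (⨅ i, hA.eigenvalues i) = hA.eigenvalues i₀ :=
    le_antisymm (ciInf_le ((Set.finite_range _).bddBelow) i₀) (le_ciInf hi₀)
  refine ⟨hA.eigenvectorBasis i₀, hA.eigenvectorBasis.orthonormal.1 i₀, ?_⟩
  have hsq : ‖toEuclideanLin M (hA.eigenvectorBasis i₀)‖ ^ 2 = hA.eigenvalues i₀ := by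
    rw [norm_sq_toEuclideanLin]
    rw [show hA.eigenvectorBasis.repr (hA.eigenvectorBasis i₀)
        = EuclideanSpace.single i₀ 1 from hA.eigenvectorBasis.repr_self i₀]
    rw [Finset.sum_eq_single i₀]
    · simp
    · intro b _ hb
      simp [EuclideanSpace.single_apply, hb]
    · simp
  have : ‖toEuclideanLin M (hA.eigenvectorBasis i₀)‖
      = Real.sqrt (hA.eigenvalues i₀) := by
    rw [← hsq, Real.sqrt_sq (norm_nonneg _)]
  rw [this]
  show Real.sqrt (hA.eigenvalues i₀) = Real.sqrt (⨅ i, hA.eigenvalues i)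
  exact congrArg Real.sqrt hμ.symm

lemma sMin_lipschitz (B : Matrix (Fin n) (Fin n) ℂ) : LipschitzWith 1 (sMin B) := by
  have key : ∀ lam lam' : ℂ, sMin B lam ≤ sMin B lam' + ‖lam - lam'‖ := by
    intro lam lam'
    obtain ⟨x, hx1, hx2⟩ := exists_unit_sMin B lam'
    have hle := sMin_le_norm B lam x hx1
    have hdecomp : toEuclideanLin (lam • (1 : Matrix (Fin n) (Fin n) ℂ) - B) x
        = toEuclideanLin (lam' • (1 : Matrix (Fin n) (Fin n) ℂ) - B) x + (lam - lam') • x := by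
      have h1 : (lam • (1 : Matrix (Fin n) (Fin n) ℂ) - B)
          = (lam' • (1 : Matrix (Fin n) (Fin n) ℂ) - B) + (lam - lam') • 1 := by
        rw [sub_smul]; abel
      rw [h1, map_add, LinearMap.add_apply]
      congr 1
      rw [_root_.map_smul, LinearMap.smul_apply]
      congr 1
      apply PiLp.ext
      intro j
      simp [toEuclideanLin_apply, one_mulVec]
    have hnorm : ‖toEuclideanLin (lam • (1 : Matrix (Fin n) (Fin n) ℂ) - B) x‖
        ≤ sMin B lam' + ‖lam - lam'‖ := by
      rw [hdecomp]
      calc _ ≤ ‖toEuclideanLin (lam' • (1 : Matrix (Fin n) (Fin n) ℂ) - B) x‖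
              + ‖(lam - lam') • x‖ := norm_add_le _ _
        _ = sMin B lam' + ‖lam - lam'‖ := by rw [hx2, norm_smul, hx1, mul_one]
    exact hle.trans hnorm
  apply LipschitzWith.of_dist_le_mul
  intro a b
  rw [Real.dist_eq, NNReal.coe_one, one_mul, abs_sub_le_iff, dist_eq_norm]
  constructor
  · have := key a b; linarith
  · have := key b a; rw [norm_sub_rev] at this; linarith

lemma sMin_eq_zero (B : Matrix (Fin n) (Fin n) ℂ) (lam : ℂ)
    (h : lam ∈ spectrum ℂ B) : sMin B lam = 0 := by
  set M := lam • (1 : Matrix (Fin n) (Fin n) ℂ) - B with hM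
  have hdet : M.det = 0 := by
    have hin := spectrum.mem_iff.mp h
    have halg : (algebraMap ℂ (Matrix (Fin n) (Fin n) ℂ)) lam
        = lam • (1 : Matrix (Fin n) (Fin n) ℂ) := Algebra.algebraMap_eq_smul_one lam
    rw [halg] at hin
    by_contra hd
    exact hin ((Matrix.isUnit_iff_isUnit_det _).mpr (isUnit_iff_ne_zero.mpr hd))
  set hA := isHermitian_conjTranspose_mul_self M
  have hdet2 : (Mᴴ * M).det = 0 := by rw [det_mul, hdet, mul_zero]
  rw [hA.det_eq_prod_eigenvalues] at hdet2
  obtain ⟨i, _, hi⟩ := Finset.prod_eq_zero_iff.mp hdet2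
  have hi' : hA.eigenvalues i = 0 := by
    rwa [RCLike.ofReal_eq_zero] at hi
  have hle : (⨅ j, hA.eigenvalues j) ≤ 0 :=
    (ciInf_le ((Set.finite_range _).bddBelow) i).trans (le_of_eq hi')
  show Real.sqrt (⨅ j, hA.eigenvalues j) = 0
  exact Real.sqrt_eq_zero'.mpr hle

end aux2


/-- Along any continuous path joining an eigenvalue of one diagonal block to an
eigenvalue of a different diagonal block, at some point of the path the minimum over
the blocks of the smallest singular value `ρ_l(λ)` of `λI - B_l` is attained
simultaneously by two different blocks. -/
theorem path_between_blocks_meets_fault_set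
    {k : ℕ} (hk : 2 ≤ k) (m : Fin k → ℕ) (hm : ∀ l, 1 ≤ m l)
    (B : ∀ l : Fin k, Matrix (Fin (m l)) (Fin (m l)) ℂ)
    (φ : ℝ → ℂ) (hφ : ContinuousOn φ (Set.Icc 0 1))
    (l₀ l₁ : Fin k) (hl : l₀ ≠ l₁)
    (h0 : φ 0 ∈ spectrum ℂ (B l₀)) (h1 : φ 1 ∈ spectrum ℂ (B l₁)) :
    ∃ t ∈ Set.Icc (0 : ℝ) 1, ∃ p q : Fin k, p ≠ q ∧
      sMin (B p) (φ t) = sMin (B q) (φ t) ∧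
      ∀ r : Fin k, sMin (B p) (φ t) ≤ sMin (B r) (φ t) := by
  classical
  haveI : ∀ l, NeZero (m l) := fun l => ⟨Nat.one_le_iff_ne_zero.mp (hm l)⟩
  set f : Fin k → ℝ → ℝ := fun l t => sMin (B l) (φ t) with hf
  have hcont : ∀ l, ContinuousOn (f l) (Set.Icc 0 1) := fun l =>
    ((sMin_lipschitz (B l)).continuous).comp_continuousOn hφ
  have hl₁ : l₁ ∈ Finset.univ.erase l₀ :=
    Finset.mem_erase.mpr ⟨hl.symm, Finset.mem_univ _⟩
  have hne : (Finset.univ.erase l₀).Nonempty := ⟨l₁, hl₁⟩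
  set g : ℝ → ℝ := fun t => (Finset.univ.erase l₀).inf' hne (fun q => f q t) with hg
  have hgcont : ContinuousOn g (Set.Icc 0 1) :=
    ContinuousOn.finset_inf'_apply hne (fun q _ => hcont q)
  set h : ℝ → ℝ := fun t => f l₀ t - g t with hh
  have hhcont : ContinuousOn h (Set.Icc 0 1) := (hcont l₀).sub hgcont
  have h0' : h 0 ≤ 0 := by
    have hz : f l₀ 0 = 0 := sMin_eq_zero _ _ h0
    have hg0 : 0 ≤ g 0 := Finset.le_inf' hne _ (fun q _ => Real.sqrt_nonneg _)
    simp only [hh, hz]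
    linarith
  have h1' : 0 ≤ h 1 := by
    have hz : f l₁ 1 = 0 := sMin_eq_zero _ _ h1
    have hg1 : g 1 ≤ 0 := hz ▸ Finset.inf'_le _ hl₁
    have hf0 : 0 ≤ f l₀ 1 := Real.sqrt_nonneg _
    simp only [hh]
    linarith
  obtain ⟨t, ht, hht⟩ := intermediate_value_Icc zero_le_one hhcont ⟨h0', h1'⟩
  obtain ⟨q, hq, hgq⟩ := Finset.exists_mem_eq_inf' hne (fun q => f q t)
  have hfg : f l₀ t = g t := by
    have : f l₀ t - g t = 0 := hht
    linarith
  refine ⟨t, ht, l₀, q, ((Finset.mem_erase.mp hq).1).symm, ?_, ?_⟩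
  · show f l₀ t = f q t
    rw [hfg]
    exact hgq
  · intro r
    show f l₀ t ≤ f r t
    by_cases hr : r = l₀
    · rw [hr]
    · rw [hfg]
      exact Finset.inf'_le _ (Finset.mem_erase.mpr ⟨hr, Finset.mem_univ _⟩)
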